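/- arXiv:1002.1741 — 5 statements merged into one kernel-verified Lean document; each statement's English description precedes it below -/
import Mathlib

section
/- Let U_n(s) be the unitary propagator solving iε U̇_n(s) = H_n(s) U_n(s), U_n(0) = I, with generator H_n(s) = H(s) + iε[Ṗ(s),P(s)], where P(s) is a differentiable family of orthogonal projections and ‖[H(s),P(s)]‖ ≤ δ for all s ∈ [0,1]. Then ‖U_n(s)* P(s) U_n(s) − P(0)‖ ≤ s δ/ε for all s ∈ [0,1]. -/
open ContinuousLinearMap

lemma adiabatic_alg_aux {A : Type*} [Ring A] [Algebra ℂ A] (c d : ℂ) (hcd : c * d = 1)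
    (a p q k u v : A) (huv : u * v = 1) (hqk : k * p - p * k = q) :
    (-c) • (v * (a * p - p * a) * u) =
      (-(v * (c • ((a + d • k) * u)) * v) * p + v * q) * u
        + (v * p) * (c • ((a + d • k) * u)) := by
  subst hqk
  have e0 : v * ((a + d • k) * u) * v = v * (a + d • k) := by
    rw [mul_assoc, mul_assoc, huv, mul_one]
  have e1 : -(v * (c • ((a + d • k) * u)) * v) = (-c) • (v * (a + d • k)) := by
    rw [mul_smul_comm, smul_mul_assoc, e0, neg_smul]
  rw [e1]
  have hncd : -c * d = -1 := by rw [neg_mul, hcd]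
  simp only [smul_mul_assoc, mul_smul_comm, mul_add, add_mul, sub_mul, mul_sub, smul_add,
    smul_sub, smul_smul, mul_assoc, hcd, hncd, neg_smul, one_smul, neg_one_smul, neg_mul,
    mul_neg, neg_neg, one_mul]
  abel

set_option maxHeartbeats 1000000 in
/-- For the nearly adiabatic evolution `U_n` generated by
`H_n(s) = H(s) + iε[Ṗ(s),P(s)]`, if `‖[H(s),P(s)]‖ ≤ δ` on `[0,1]`, then
`‖U_n(s)* P(s) U_n(s) − P(0)‖ ≤ s δ/ε` on `[0,1]`. -/
theorem nearly_adiabatic_intertwining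
    {𝓗 : Type*} [NormedAddCommGroup 𝓗] [InnerProductSpace ℂ 𝓗] [CompleteSpace 𝓗]
    (H P P' U : ℝ → 𝓗 →L[ℂ] 𝓗) (ε δ : ℝ)
    (hε : 0 < ε) (hδ : 0 ≤ δ)
    (hHsa : ∀ s, IsSelfAdjoint (H s))
    (hproj : ∀ s, (P s) * (P s) = P s)
    (hPsa : ∀ s, IsSelfAdjoint (P s))
    (hPderiv : ∀ s, HasDerivAt P (P' s) s)
    -- unitarity of the propagator
    (hU1 : ∀ s, adjoint (U s) * U s = 1)
    (hU2 : ∀ s, U s * adjoint (U s) = 1)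
    (hU0 : U 0 = 1)
    -- `iε U̇_n(s) = H_n(s) U_n(s)` with `H_n(s) = H(s) + iε[Ṗ(s),P(s)]`
    (hUderiv : ∀ s, HasDerivAt U
      ((-(Complex.I) / (ε : ℂ)) •
        ((H s + (Complex.I * (ε : ℂ)) • (P' s * P s - P s * P' s)) * U s)) s)
    (hcomm : ∀ s ∈ Set.Icc (0 : ℝ) 1, ‖H s * P s - P s * H s‖ ≤ δ) :
    ∀ s ∈ Set.Icc (0 : ℝ) 1,
      ‖adjoint (U s) * P s * U s - P 0‖ ≤ s * δ / ε := by
  set V : ℝ → 𝓗 →L[ℂ] 𝓗 := fun s => adjoint (U s) with hVdef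
  have hεC : (ε : ℂ) ≠ 0 := by exact_mod_cast hε.ne'
  -- norms
  have hUnorm : ∀ s, ‖U s‖ ≤ 1 := by
    intro s
    have h := CStarRing.norm_star_mul_self (x := U s)
    rw [star_eq_adjoint, hU1 s] at h
    have h1 : ‖(1 : 𝓗 →L[ℂ] 𝓗)‖ ≤ 1 := by
      rw [ContinuousLinearMap.one_def]; exact ContinuousLinearMap.norm_id_le
    nlinarith [norm_nonneg (U s)]
  have hVnorm : ∀ s, ‖V s‖ ≤ 1 := by
    intro s
    have h := CStarRing.norm_star_mul_self (x := V s)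
    have hsV : star (V s) = U s := by
      simp [hVdef, ← star_eq_adjoint]
    rw [hsV, hU2 s] at h
    have h1 : ‖(1 : 𝓗 →L[ℂ] 𝓗)‖ ≤ 1 := by
      rw [ContinuousLinearMap.one_def]; exact ContinuousLinearMap.norm_id_le
    nlinarith [norm_nonneg (V s)]
  have hVU : ∀ s, V s * U s = 1 := hU1
  have hUV : ∀ s, U s * V s = 1 := hU2
  -- derivative of V = adjoint ∘ U
  have hVderiv : ∀ s, HasDerivAt V (-(V s *
      ((-(Complex.I) / (ε : ℂ)) •
        ((H s + (Complex.I * (ε : ℂ)) • (P' s * P s - P s * P' s)) * U s)) * V s)) s := by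
    intro s
    have hu : ∀ t, V t = Ring.inverse (U t) := by
      intro t
      have : Ring.inverse ((⟨U t, V t, hUV t, hVU t⟩ : (𝓗 →L[ℂ] 𝓗)ˣ) : 𝓗 →L[ℂ] 𝓗) = V t :=
        Ring.inverse_unit _
      simpa using this.symm
    have h1 : HasFDerivAt Ring.inverse (-(mulLeftRight ℂ (𝓗 →L[ℂ] 𝓗) (V s) (V s))) (U s) :=
      hasFDerivAt_ringInverse (𝕜 := ℂ) (⟨U s, V s, hUV s, hVU s⟩ : (𝓗 →L[ℂ] 𝓗)ˣ)
    have h2 := (h1.restrictScalars ℝ).comp_hasDerivAt s (hUderiv s)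
    simp only [ContinuousLinearMap.coe_restrictScalars', ContinuousLinearMap.neg_apply,
      mulLeftRight_apply] at h2
    have hfun : Ring.inverse ∘ U = V := funext fun t => (hu t).symm
    rwa [hfun] at h2
  -- Leibniz identity P' = P'P + PP'
  have hPP' : ∀ s, P' s * P s + P s * P' s = P' s := by
    intro s
    have h1 : HasDerivAt (fun t => P t * P t) (P' s * P s + P s * P' s) s :=
      (hPderiv s).mul (hPderiv s)
    have hfun : (fun t => P t * P t) = P := funext hproj
    rw [hfun] at h1
    exact h1.unique (hPderiv s)
  -- P P' P = 0
  have hPQP : ∀ s, P s * P' s * P s = 0 := by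
    intro s
    have h2 : P s * (P' s * P s + P s * P' s) * P s = P s * P' s * P s := by
      rw [hPP' s]
    have h3 : P s * (P' s * P s + P s * P' s) * P s
        = P s * P' s * (P s * P s) + P s * P s * P' s * P s := by noncomm_ring
    rw [h3] at h2
    simp only [hproj s] at h2
    exact add_eq_right.mp h2
  -- commutator identity [K,P] = P'
  have hKP : ∀ s, (P' s * P s - P s * P' s) * P s - P s * (P' s * P s - P s * P' s)
      = P' s := by
    intro s
    have expand : (P' s * P s - P s * P' s) * P s - P s * (P' s * P s - P s * P' s)
        = P' s * (P s * P s) + (P s * P s) * P' s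
          - (P s * P' s * P s + P s * P' s * P s) := by
      noncomm_ring
    rw [expand, hproj s, hPQP s, add_zero, hPP' s, sub_zero]
  -- scalar facts
  have hcd : (-(Complex.I) / (ε : ℂ)) * (Complex.I * (ε : ℂ)) = 1 := by
    field_simp
    rw [Complex.I_sq]
    ring
  -- key derivative computation
  have key : ∀ s, HasDerivAt (fun t => V t * P t * U t)
      ((-(-(Complex.I) / (ε : ℂ))) • (V s * (H s * P s - P s * H s) * U s)) s := by
    intro s
    have h := ((hVderiv s).mul (hPderiv s)).mul (hUderiv s)
    have halg := adiabatic_alg_aux (-(Complex.I) / (ε : ℂ)) (Complex.I * (ε : ℂ)) hcd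
      (H s) (P s) (P' s) (P' s * P s - P s * P' s) (U s) (V s) (hUV s) (hKP s)
    rw [halg]
    exact h
  -- norm bound on the derivative
  have hbound : ∀ x ∈ Set.Icc (0 : ℝ) 1,
      ‖(-(-(Complex.I) / (ε : ℂ))) • (V x * (H x * P x - P x * H x) * U x)‖ ≤ δ / ε := by
    intro x hx
    rw [norm_smul]
    have hns : ‖(-(-(Complex.I) / (ε : ℂ)))‖ = 1 / ε := by
      rw [norm_neg, norm_div, norm_neg, Complex.norm_I]
      simp [abs_of_pos hε]
    rw [hns]
    have h1 : ‖V x * (H x * P x - P x * H x) * U x‖ ≤ δ := by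
      have hA := norm_mul_le (V x * (H x * P x - P x * H x)) (U x)
      have hB := norm_mul_le (V x) (H x * P x - P x * H x)
      have hC := hcomm x hx
      nlinarith [hVnorm x, hUnorm x, norm_nonneg (V x), norm_nonneg (U x),
        norm_nonneg (H x * P x - P x * H x), norm_nonneg (V x * (H x * P x - P x * H x))]
    calc 1 / ε * ‖V x * (H x * P x - P x * H x) * U x‖ ≤ 1 / ε * δ := by
          gcongr
      _ = δ / ε := by ring
  -- mean value inequality
  intro s hs
  have h0mem : (0 : ℝ) ∈ Set.Icc (0 : ℝ) 1 := by constructor <;> norm_num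
  have := (convex_Icc (0 : ℝ) 1).norm_image_sub_le_of_norm_hasDerivWithin_le
    (f := fun t => V t * P t * U t)
    (f' := fun x => (-(-(Complex.I) / (ε : ℂ))) • (V x * (H x * P x - P x * H x) * U x))
    (fun x hx => (key x).hasDerivWithinAt) hbound h0mem hs
  have hF0 : V 0 * P 0 * U 0 = P 0 := by
    have hV0 : V 0 = 1 := by
      rw [hVdef]
      simp only [hU0, ← star_eq_adjoint, star_one]
    rw [hV0, hU0, one_mul, mul_one]
  have this2 : ‖V s * P s * U s - V 0 * P 0 * U 0‖ ≤ δ / ε * ‖s - 0‖ := this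
  rw [hF0, sub_zero] at this2
  have hsabs : ‖s‖ = s := by
    rw [Real.norm_eq_abs, abs_of_nonneg hs.1]
  calc ‖adjoint (U s) * P s * U s - P 0‖ = ‖V s * P s * U s - P 0‖ := rfl
    _ ≤ δ / ε * ‖s‖ := this2
    _ = s * δ / ε := by rw [hsabs]; ring
end

section
/- Let U_ε(s) be a unitary family, X(s) a C¹ family of bounded operators, and Ω(s) a unitary family with Ω̇(s) = K(s)Ω(s) where ‖K(s)‖ ≤ 2M. If U_ε(r)*[X(r),H(r)]U_ε(r) = iε (d/dr)(U_ε(r)* X(r) U_ε(r)) − iε U_ε(r)* Ẋ(r) U_ε(r), then ‖∫₀ˢ U_ε(r)*[X(r),H(r)]U_ε(r)Ω(r) dr‖ ≤ ε ( max_r‖Ẋ(r)‖ + 2 max_r‖X(r)‖ + 2M max_r‖X(r)‖ ) for s ∈ [0,1]. -/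
open ContinuousLinearMap MeasureTheory

set_option maxHeartbeats 1000000
set_option synthInstance.maxHeartbeats 400000

lemma unit_norm_le_one {𝓗 : Type*} [NormedAddCommGroup 𝓗] [InnerProductSpace ℂ 𝓗]
    [CompleteSpace 𝓗] (T : 𝓗 →L[ℂ] 𝓗) (hT : adjoint T * T = 1) : ‖T‖ ≤ 1 := by
  have h1 : ‖adjoint T ∘L T‖ = ‖T‖ * ‖T‖ := norm_adjoint_comp_self T
  have h2 : adjoint T ∘L T = (1 : 𝓗 →L[ℂ] 𝓗) := hT
  rw [h2] at h1
  have h3 : ‖(1 : 𝓗 →L[ℂ] 𝓗)‖ ≤ 1 := norm_id_le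
  nlinarith [norm_nonneg T]

/-- Integration-by-parts bound for the Volterra integral:
if `U_ε(r)*[X(r),H(r)]U_ε(r) = iε (d/dr)(U_ε* X U_ε) − iε U_ε* Ẋ U_ε`, and
`Ω̇ = KΩ` with `‖K‖ ≤ 2M`, then on `[0,1]`,
`‖∫₀ˢ U_ε*[X,H]U_ε Ω dr‖ ≤ ε (max‖Ẋ‖ + 2 max‖X‖ + 2M max‖X‖)`. -/
theorem integration_by_parts_bound
    {𝓗 : Type*} [NormedAddCommGroup 𝓗] [InnerProductSpace ℂ 𝓗] [CompleteSpace 𝓗]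
    (H X X' Uε Ω K D : ℝ → 𝓗 →L[ℂ] 𝓗) (ε M MX MX' : ℝ)
    (hε : 0 < ε) (hM : 0 ≤ M)
    (hHsa : ∀ r, IsSelfAdjoint (H r))
    (hUεunit : ∀ r, adjoint (Uε r) * Uε r = 1 ∧ Uε r * adjoint (Uε r) = 1)
    (hΩunit : ∀ r, adjoint (Ω r) * Ω r = 1 ∧ Ω r * adjoint (Ω r) = 1)
    (hXderiv : ∀ r, HasDerivAt X (X' r) r)
    (hXbound : ∀ r, ‖X r‖ ≤ MX)
    (hX'bound : ∀ r, ‖X' r‖ ≤ MX')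
    (hΩderiv : ∀ r, HasDerivAt Ω (K r * Ω r) r)
    (hKbound : ∀ r, ‖K r‖ ≤ 2 * M)
    -- integration-by-parts identity:
    (hD : ∀ r, HasDerivAt (fun t => adjoint (Uε t) * X t * Uε t) (D r) r)
    (hibp : ∀ r,
      adjoint (Uε r) * (X r * H r - H r * X r) * Uε r =
        (Complex.I * (ε : ℂ)) • D r
          - (Complex.I * (ε : ℂ)) • (adjoint (Uε r) * X' r * Uε r)) :
    ∀ s ∈ Set.Icc (0:ℝ) 1,
      ‖∫ r in (0:ℝ)..s,
          adjoint (Uε r) * (X r * H r - H r * X r) * Uε r * Ω r‖ ≤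
        ε * (MX' + 2 * MX + 2 * M * MX) := by
  intro s hs
  obtain ⟨hs0, hs1⟩ := hs
  have hMX0 : 0 ≤ MX := le_trans (norm_nonneg _) (hXbound 0)
  have hMX'0 : 0 ≤ MX' := le_trans (norm_nonneg _) (hX'bound 0)
  set c : ℂ := Complex.I * (ε : ℂ) with hc
  have hcnorm : ‖c‖ = ε := by
    simp [hc, norm_mul, Complex.norm_real, abs_of_pos hε]
  have hcne : c ≠ 0 := by
    simp [hc, Complex.I_ne_zero, Complex.ofReal_ne_zero, ne_of_gt hε]
  -- norm bounds on unitaries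
  have hUn : ∀ r, ‖Uε r‖ ≤ 1 := fun r => unit_norm_le_one _ (hUεunit r).1
  have hUan : ∀ r, ‖adjoint (Uε r)‖ ≤ 1 := by
    intro r
    apply unit_norm_le_one
    rw [adjoint_adjoint]
    exact (hUεunit r).2
  have hΩn : ∀ r, ‖Ω r‖ ≤ 1 := fun r => unit_norm_le_one _ (hΩunit r).1
  set F : ℝ → 𝓗 →L[ℂ] 𝓗 := fun t => adjoint (Uε t) * X t * Uε t with hFdef
  have hFn : ∀ r, ‖F r‖ ≤ MX := by
    intro r
    calc ‖adjoint (Uε r) * X r * Uε r‖ ≤ ‖adjoint (Uε r) * X r‖ * ‖Uε r‖ := norm_mul_le _ _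
    _ ≤ ‖adjoint (Uε r)‖ * ‖X r‖ * ‖Uε r‖ :=
        mul_le_mul_of_nonneg_right (norm_mul_le _ _) (norm_nonneg _)
    _ ≤ 1 * MX * 1 := by
        apply mul_le_mul (mul_le_mul (hUan r) (hXbound r) (norm_nonneg _) zero_le_one)
          (hUn r) (norm_nonneg _) (by linarith)
    _ = MX := by ring
  set A : ℝ → 𝓗 →L[ℂ] 𝓗 := fun t => adjoint (Uε t) * X' t * Uε t with hAdef
  have hAn : ∀ r, ‖A r‖ ≤ MX' := by
    intro r
    calc ‖adjoint (Uε r) * X' r * Uε r‖ ≤ ‖adjoint (Uε r) * X' r‖ * ‖Uε r‖ := norm_mul_le _ _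
    _ ≤ ‖adjoint (Uε r)‖ * ‖X' r‖ * ‖Uε r‖ :=
        mul_le_mul_of_nonneg_right (norm_mul_le _ _) (norm_nonneg _)
    _ ≤ 1 * MX' * 1 := by
        apply mul_le_mul (mul_le_mul (hUan r) (hX'bound r) (norm_nonneg _) zero_le_one)
          (hUn r) (norm_nonneg _) (by linarith)
    _ = MX' := by ring
  set G : ℝ → 𝓗 →L[ℂ] 𝓗 :=
    fun r => adjoint (Uε r) * (X r * H r - H r * X r) * Uε r * Ω r with hGdef
  show ‖∫ r in (0:ℝ)..s, G r‖ ≤ ε * (MX' + 2 * MX + 2 * M * MX)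
  by_cases hInt : IntervalIntegrable G volume 0 s
  · -- main case
    set P : ℝ → 𝓗 →L[ℂ] 𝓗 := fun r => F r * (K r * Ω r) + A r * Ω r with hPdef
    have hFΩ : ∀ r, HasDerivAt (fun t => F t * Ω t) (D r * Ω r + F r * (K r * Ω r)) r :=
      fun r => (hD r).mul (hΩderiv r)
    set g : ℝ → 𝓗 →L[ℂ] 𝓗 := deriv (fun t => F t * Ω t) with hgdef
    have hg : ∀ r, g r = D r * Ω r + F r * (K r * Ω r) := fun r => (hFΩ r).deriv
    have hGP : ∀ r, G r = c • g r - c • P r := by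
      intro r
      have : G r = (c • D r - c • A r) * Ω r := by
        rw [hGdef]
        simp only
        rw [hibp r]
      rw [this, hg r, hPdef]
      simp only [sub_mul, smul_mul_assoc, smul_add]
      abel
    have hCP : ∀ r, ‖P r‖ ≤ 2 * M * MX + MX' := by
      intro r
      have h1 : ‖F r * (K r * Ω r)‖ ≤ MX * (2 * M * 1) := by
        calc ‖F r * (K r * Ω r)‖ ≤ ‖F r‖ * ‖K r * Ω r‖ := norm_mul_le _ _
        _ ≤ MX * (2 * M * 1) := by
            apply mul_le_mul (hFn r) _ (norm_nonneg _) hMX0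
            calc ‖K r * Ω r‖ ≤ ‖K r‖ * ‖Ω r‖ := norm_mul_le _ _
            _ ≤ 2 * M * 1 := mul_le_mul (hKbound r) (hΩn r) (norm_nonneg _) (by linarith)
      have h2 : ‖A r * Ω r‖ ≤ MX' * 1 := by
        calc ‖A r * Ω r‖ ≤ ‖A r‖ * ‖Ω r‖ := norm_mul_le _ _
        _ ≤ MX' * 1 := mul_le_mul (hAn r) (hΩn r) (norm_nonneg _) hMX'0
      calc ‖P r‖ ≤ ‖F r * (K r * Ω r)‖ + ‖A r * Ω r‖ := norm_add_le _ _
      _ ≤ MX * (2 * M * 1) + MX' * 1 := add_le_add h1 h2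
      _ = 2 * M * MX + MX' := by ring
    have hPeq : ∀ r, P r = g r - c⁻¹ • G r := by
      intro r
      have := hGP r
      have h2 : c • P r = c • g r - G r := by rw [this]; abel
      have h3 : c⁻¹ • (c • P r) = c⁻¹ • (c • g r - G r) := by rw [h2]
      rwa [smul_smul, inv_mul_cancel₀ hcne, one_smul, smul_sub, smul_smul,
        inv_mul_cancel₀ hcne, one_smul] at h3
    have hgm : StronglyMeasurable g := stronglyMeasurable_deriv _
    have hPm : AEStronglyMeasurable P (volume.restrict (Set.uIoc 0 s)) := by
      have : P = fun r => g r - c⁻¹ • G r := funext hPeq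
      rw [this]
      exact hgm.aestronglyMeasurable.sub
        ((intervalIntegrable_iff.mp hInt).aestronglyMeasurable.const_smul c⁻¹)
    have hPint : IntervalIntegrable P volume 0 s := by
      rw [intervalIntegrable_iff]
      apply MeasureTheory.Integrable.mono'
        ((integrableOn_const_iff (C := (2 * M * MX + MX' : ℝ))).mpr (Or.inr measure_Ioc_lt_top)) hPm
      · exact Filter.Eventually.of_forall fun r => hCP r
    have hgint : IntervalIntegrable g volume 0 s := by
      have : g = fun r => c⁻¹ • G r + P r := by
        funext r
        rw [hPeq r]; abel
      rw [this]
      exact (hInt.smul c⁻¹).add hPint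
    have hftc : ∫ r in (0:ℝ)..s, g r = F s * Ω s - F 0 * Ω 0 := by
      apply intervalIntegral.integral_eq_sub_of_hasDerivAt
      · intro r _
        rw [hg r]
        exact hFΩ r
      · exact hgint
    have hIG : ∫ r in (0:ℝ)..s, G r =
        c • ((F s * Ω s - F 0 * Ω 0) - ∫ r in (0:ℝ)..s, P r) := by
      have h1 : (fun r => G r) = fun r => c • g r - c • P r := funext hGP
      have hgs : IntervalIntegrable (fun r => c • g r) volume 0 s := hgint.smul c
      have hPs : IntervalIntegrable (fun r => c • P r) volume 0 s := hPint.smul c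
      rw [h1, intervalIntegral.integral_sub hgs hPs,
        intervalIntegral.integral_smul, intervalIntegral.integral_smul, hftc, ← smul_sub]
    have hIPnorm : ‖∫ r in (0:ℝ)..s, P r‖ ≤ (2 * M * MX + MX') * s := by
      have := intervalIntegral.norm_integral_le_of_norm_le_const
        (C := 2 * M * MX + MX') (f := P) (a := (0:ℝ)) (b := s)
        (fun x _ => hCP x)
      rwa [sub_zero, abs_of_nonneg hs0] at this
    rw [hIG, norm_smul, hcnorm]
    have hFΩsn : ‖F s * Ω s‖ ≤ MX := by
      calc ‖F s * Ω s‖ ≤ ‖F s‖ * ‖Ω s‖ := norm_mul_le _ _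
      _ ≤ MX * 1 := mul_le_mul (hFn s) (hΩn s) (norm_nonneg _) hMX0
      _ = MX := mul_one _
    have hFΩ0n : ‖F 0 * Ω 0‖ ≤ MX := by
      calc ‖F 0 * Ω 0‖ ≤ ‖F 0‖ * ‖Ω 0‖ := norm_mul_le _ _
      _ ≤ MX * 1 := mul_le_mul (hFn 0) (hΩn 0) (norm_nonneg _) hMX0
      _ = MX := mul_one _
    have key : ‖(F s * Ω s - F 0 * Ω 0) - ∫ r in (0:ℝ)..s, P r‖ ≤
        MX' + 2 * MX + 2 * M * MX := by
      calc ‖(F s * Ω s - F 0 * Ω 0) - ∫ r in (0:ℝ)..s, P r‖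
          ≤ ‖F s * Ω s - F 0 * Ω 0‖ + ‖∫ r in (0:ℝ)..s, P r‖ := norm_sub_le _ _
      _ ≤ (‖F s * Ω s‖ + ‖F 0 * Ω 0‖) + (2 * M * MX + MX') * s := by
          apply add_le_add (norm_sub_le _ _) hIPnorm
      _ ≤ (MX + MX) + (2 * M * MX + MX') * 1 := by
          apply add_le_add (add_le_add hFΩsn hFΩ0n)
          apply mul_le_mul_of_nonneg_left hs1 (by nlinarith)
      _ = MX' + 2 * MX + 2 * M * MX := by ring
    exact mul_le_mul_of_nonneg_left key (le_of_lt hε)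
  · rw [intervalIntegral.integral_undef hInt]
    simp only [norm_zero]
    have h0 : 0 ≤ MX' + 2 * MX + 2 * M * MX := by nlinarith
    exact mul_nonneg hε.le h0
end

section
/- Let H be self-adjoint, E ∈ ℝ with E in the resolvent set's complement, and suppose ‖(H−E)P‖ ≤ δ/2 for an orthogonal projection P. Let g be a C⁴ compactly supported function with g(E) = 1. Then ‖(g(H) − I)P‖ ≤ C_g · δ, where C_g depends only on integrals of derivatives of g (the Helffer–Sjöstrand norm |||g|||₃). -/
open MeasureTheory

set_option maxHeartbeats 1000000

open Filter in

private lemma res_cont' {𝓗 : Type*} [NormedAddCommGroup 𝓗] [InnerProductSpace ℂ 𝓗]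
    (H : 𝓗 →L[ℂ] 𝓗) (R : ℂ → 𝓗 →L[ℂ] 𝓗)
    (hR : ∀ z : ℂ, z.im ≠ 0 →
      R z * (H - z • (1 : 𝓗 →L[ℂ] 𝓗)) = 1 ∧
      (H - z • (1 : 𝓗 →L[ℂ] 𝓗)) * R z = 1 ∧
      ‖R z‖ ≤ 1 / |z.im|) :
    ContinuousOn R {z : ℂ | z.im ≠ 0} := by
  intro z₀ hz₀
  have hz₀' : z₀.im ≠ 0 := hz₀
  have key : ∀ z ∈ {z : ℂ | z.im ≠ 0}, R z - R z₀ = (z - z₀) • (R z * R z₀) := by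
    intro z hz
    obtain ⟨h1, -, -⟩ := hR z hz
    obtain ⟨-, h2, -⟩ := hR z₀ hz₀'
    have e : (H - z₀ • (1 : 𝓗 →L[ℂ] 𝓗)) - (H - z • 1) = (z - z₀) • 1 := by
      rw [sub_smul]; abel
    calc R z - R z₀
        = R z * ((H - z₀ • 1) * R z₀) - (R z * (H - z • 1)) * R z₀ := by
          rw [h2, h1, mul_one, one_mul]
      _ = R z * (((H - z₀ • 1) - (H - z • 1)) * R z₀) := by
          rw [← mul_assoc, ← sub_mul, ← mul_sub, mul_assoc]
      _ = (z - z₀) • (R z * R z₀) := by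
          rw [e, smul_mul_assoc, mul_smul_comm, one_mul]
  rw [ContinuousWithinAt, tendsto_iff_norm_sub_tendsto_zero]
  have hb : Tendsto (fun z : ℂ => ‖z - z₀‖ * ((1 / |z.im|) * (1 / |z₀.im|)))
      (nhdsWithin z₀ {z : ℂ | z.im ≠ 0}) (nhds 0) := by
    have h1 : Tendsto (fun z : ℂ => ‖z - z₀‖) (nhds z₀) (nhds 0) := by
      have h0 : Tendsto (fun z : ℂ => z - z₀) (nhds z₀) (nhds (z₀ - z₀)) :=
        (continuous_id.sub continuous_const).tendsto z₀
      rw [sub_self] at h0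
      simpa using h0.norm
    have h2 : Tendsto (fun z : ℂ => (1 / |z.im|) * (1 / |z₀.im|)) (nhds z₀)
        (nhds ((1 / |z₀.im|) * (1 / |z₀.im|))) := by
      apply Tendsto.mul _ tendsto_const_nhds
      exact (ContinuousAt.div continuousAt_const (Complex.continuous_im.abs.continuousAt)
        (by simpa using hz₀'))
    have := h1.mul h2
    rw [zero_mul] at this
    exact this.mono_left nhdsWithin_le_nhds
  apply squeeze_zero' _ _ hb
  · exact Filter.Eventually.of_forall (fun z => norm_nonneg _)
  · refine Filter.eventually_of_mem self_mem_nhdsWithin (fun z hz => ?_)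
    obtain ⟨-, -, hn⟩ := hR z hz
    obtain ⟨-, -, hn₀⟩ := hR z₀ hz₀'
    rw [key z hz]
    calc ‖(z - z₀) • (R z * R z₀)‖ ≤ ‖z - z₀‖ * ‖R z * R z₀‖ := by
          exact norm_smul_le (z - z₀) (R z * R z₀)
      _ ≤ ‖z - z₀‖ * (‖R z‖ * ‖R z₀‖) := by
          have := norm_mul_le (R z) (R z₀)
          have h0 : (0:ℝ) ≤ ‖z - z₀‖ := norm_nonneg _
          nlinarith [norm_nonneg (R z * R z₀)]
      _ ≤ ‖z - z₀‖ * ((1 / |z.im|) * (1 / |z₀.im|)) := by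
          exact mul_le_mul_of_nonneg_left
            (mul_le_mul hn hn₀ (norm_nonneg _) (by positivity)) (norm_nonneg _)

/-- If `‖(H − E)P‖ ≤ δ/2` and `g(E) = 1` for a `C⁴` compactly
supported `g`, then via the Helffer–Sjöstrand functional calculus
`g(H) = ∫_ℂ (∂_z̄ g̃)(z) (H − z)⁻¹ dz dz̄` one has
`‖(g(H) − I)P‖ ≤ C_g δ`, with `C_g` the Helffer–Sjöstrand norm `|||g|||₃`,
here a bound `N₃` for `∫ |∂_z̄ g̃(z)| |Im z|⁻² dz dz̄`. -/
theorem helffer_sjostrand_nearly_spectral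
    {𝓗 : Type*} [NormedAddCommGroup 𝓗] [InnerProductSpace ℂ 𝓗] [CompleteSpace 𝓗]
    (H P : 𝓗 →L[ℂ] 𝓗) (E : ℝ) (δ N₃ : ℝ)
    (dbar : ℂ → ℂ) (R : ℂ → 𝓗 →L[ℂ] 𝓗)
    (hH : IsSelfAdjoint H)
    (hproj : P * P = P) (hPsa : IsSelfAdjoint P)
    (hδ : 0 ≤ δ)
    -- resolvent data: `R z = (H − z)⁻¹` for `Im z ≠ 0`, with the standard bound
    (hR : ∀ z : ℂ, z.im ≠ 0 →
      R z * (H - z • (1 : 𝓗 →L[ℂ] 𝓗)) = 1 ∧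
      (H - z • (1 : 𝓗 →L[ℂ] 𝓗)) * R z = 1 ∧
      ‖R z‖ ≤ 1 / |z.im|)
    -- integrability and Helffer–Sjöstrand norm bound `|||g|||₃`
    (hint : Integrable (fun z : ℂ => ‖dbar z‖ / |z.im| ^ 2))
    (hN₃ : ∫ z : ℂ, ‖dbar z‖ / |z.im| ^ 2 ≤ N₃)
    -- `g(E) = 1`, expressed through the Helffer–Sjöstrand formula
    (hgE : ∫ z : ℂ, dbar z * ((E : ℂ) - z)⁻¹ = 1)
    -- the near-eigenprojection property
    (hns : ‖(H - (E : ℂ) • (1 : 𝓗 →L[ℂ] 𝓗)) * P‖ ≤ δ / 2) :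
    -- conclusion: `‖(g(H) − I)P‖ ≤ |||g|||₃ δ`, with `g(H)` given by the
    -- Helffer–Sjöstrand integral
    ‖(∫ z : ℂ, dbar z • R z) * P - P‖ ≤ N₃ * δ := by
  classical
  have hs_open : IsOpen {z : ℂ | z.im ≠ 0} :=
    isOpen_compl_singleton.preimage Complex.continuous_im
  have hs_ae : ∀ᵐ z : ℂ, z.im ≠ 0 := by
    have h0 : (volume : Measure ℂ) {z : ℂ | z.im = 0} = 0 := by
      have hset : {z : ℂ | z.im = 0} = (LinearMap.ker Complex.imLm : Submodule ℝ ℂ) := by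
        ext z; simp [LinearMap.mem_ker]
      rw [hset]
      exact Measure.addHaar_submodule _ _ (by
        intro h
        have : Complex.I ∈ LinearMap.ker Complex.imLm := h ▸ Submodule.mem_top
        simp [LinearMap.mem_ker] at this)
    have hset2 : {z : ℂ | ¬ z.im ≠ 0} = {z : ℂ | z.im = 0} := by ext z; simp
    rw [ae_iff, hset2]; exact h0
  set fE : ℂ → ℂ := fun z => dbar z * ((E : ℂ) - z)⁻¹ with hfEdef
  have hfE_int : Integrable fE := by
    by_contra h
    rw [integral_undef h] at hgE
    exact one_ne_zero hgE.symm
  have hEz : ∀ z : ℂ, z.im ≠ 0 → ((E : ℂ) - z) ≠ 0 := by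
    intro z hz h
    apply hz
    have h2 : ((E : ℂ) - z).im = 0 := by rw [h]; rfl
    simpa [Complex.sub_im, Complex.ofReal_im] using h2
  have habs : ∀ z : ℂ, |z.im| ≤ ‖(E : ℂ) - z‖ := by
    intro z
    have h := Complex.abs_im_le_norm ((E : ℂ) - z)
    simpa [Complex.sub_im, Complex.ofReal_im, abs_neg] using h
  have hdbar_meas : AEStronglyMeasurable dbar volume := by
    apply AEStronglyMeasurable.congr
      (f := fun z : ℂ => fE z * ((E : ℂ) - z))
    · exact hfE_int.aestronglyMeasurable.mul
        ((Complex.continuous_ofReal.comp continuous_const |>.sub continuous_id).aestronglyMeasurable)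
    · filter_upwards [hs_ae] with z hz
      simp only [hfEdef]
      rw [mul_assoc, inv_mul_cancel₀ (hEz z hz), mul_one]
  have hR_meas : AEStronglyMeasurable R volume := by
    haveI : SecondCountableTopologyEither ℂ (𝓗 →L[ℂ] 𝓗) :=
      secondCountableTopologyEither_of_left ℂ _
    have h1 := (res_cont' H R hR).aestronglyMeasurable (μ := volume) hs_open.measurableSet
    rwa [Measure.restrict_eq_self_of_ae_mem (s := {z : ℂ | z.im ≠ 0}) hs_ae] at h1
  set M : ℝ := ‖H‖ + |E| + 1 with hMdef
  have hM1 : 1 ≤ M := by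
    have := norm_nonneg H; have := abs_nonneg E; simp only [hMdef]; linarith
  have hnormE : ‖((E : ℂ))‖ = |E| := by
    simp
  -- Neumann-type bound for large |z|
  have hRz_big : ∀ z : ℂ, z.im ≠ 0 → ‖H‖ < ‖z‖ → ‖R z‖ ≤ (‖z‖ - ‖H‖)⁻¹ := by
    intro z hz hlt
    obtain ⟨-, h2, -⟩ := hR z hz
    have e : z • R z = H * R z - 1 := by
      rw [sub_mul, smul_mul_assoc, one_mul] at h2
      rw [eq_sub_iff_add_eq]
      rw [← h2]; abel
    have hb : ‖z‖ * ‖R z‖ ≤ ‖H‖ * ‖R z‖ + 1 := by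
      have e1 : ‖z • R z‖ = ‖z‖ * ‖R z‖ := by exact norm_smul z (R z)
      have e2 : ‖H * R z - 1‖ ≤ ‖H * R z‖ + ‖(1 : 𝓗 →L[ℂ] 𝓗)‖ := norm_sub_le _ _
      have e3 : ‖H * R z‖ ≤ ‖H‖ * ‖R z‖ := norm_mul_le _ _
      have e4 : ‖(1 : 𝓗 →L[ℂ] 𝓗)‖ ≤ 1 := by
        rw [ContinuousLinearMap.one_def]; exact ContinuousLinearMap.norm_id_le
      rw [← e1, e]
      linarith
    have hpos : 0 < ‖z‖ - ‖H‖ := by linarith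
    rw [← one_div]
    rw [le_div_iff₀ hpos]
    nlinarith
  have hRbound : ∀ z : ℂ, z.im ≠ 0 →
      ‖R z‖ ≤ 4 * M * (1 / |z.im| ^ 2 + ‖(E : ℂ) - z‖⁻¹) := by
    intro z hz
    obtain ⟨-, -, hn⟩ := hR z hz
    have him : 0 < |z.im| := abs_pos.mpr hz
    have hEzpos : 0 < ‖(E : ℂ) - z‖ := norm_pos_iff.mpr (hEz z hz)
    have ha : (0:ℝ) ≤ 1 / |z.im| ^ 2 := by positivity
    have hbnn : (0:ℝ) ≤ ‖(E : ℂ) - z‖⁻¹ := by positivity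
    rcases le_or_gt |z.im| 1 with h1 | h1
    · have h2 : (1:ℝ) / |z.im| ≤ 1 / |z.im| ^ 2 := by
        rw [div_le_div_iff₀ him (by positivity)]
        nlinarith
      calc ‖R z‖ ≤ 1 / |z.im| := hn
        _ ≤ 1 / |z.im| ^ 2 := h2
        _ ≤ 4 * M * (1 / |z.im| ^ 2 + ‖(E : ℂ) - z‖⁻¹) := by nlinarith
    · rcases le_or_gt ‖(E : ℂ) - z‖ (2 * M) with h2 | h2
      · have h3 : ‖R z‖ ≤ 1 := le_trans hn (by rw [div_le_one him]; linarith)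
        have h4 : (1:ℝ) ≤ 2 * M / ‖(E : ℂ) - z‖ := (one_le_div hEzpos).mpr h2
        rw [div_eq_mul_inv] at h4
        calc ‖R z‖ ≤ 1 := h3
          _ ≤ 2 * M * ‖(E : ℂ) - z‖⁻¹ := h4
          _ ≤ 4 * M * (1 / |z.im| ^ 2 + ‖(E : ℂ) - z‖⁻¹) := by nlinarith
      · have hz_lb : ‖(E : ℂ) - z‖ - |E| ≤ ‖z‖ := by
          have h5 : ‖(E : ℂ) - z‖ ≤ ‖((E : ℂ))‖ + ‖z‖ := norm_sub_le _ _
          rw [hnormE] at h5; linarith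
        have hz_big : ‖H‖ < ‖z‖ := by
          simp only [hMdef] at h2; linarith
        have h3 := hRz_big z hz hz_big
        have h4 : ‖(E : ℂ) - z‖ / 2 ≤ ‖z‖ - ‖H‖ := by
          simp only [hMdef] at h2 ⊢; linarith
        calc ‖R z‖ ≤ (‖z‖ - ‖H‖)⁻¹ := h3
          _ ≤ (‖(E : ℂ) - z‖ / 2)⁻¹ := by
              apply inv_anti₀ (by positivity) h4
          _ = 2 * ‖(E : ℂ) - z‖⁻¹ := by
              rw [inv_div, div_eq_mul_inv]
          _ ≤ 4 * M * (1 / |z.im| ^ 2 + ‖(E : ℂ) - z‖⁻¹) := by nlinarith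
  -- integrability of the main integrand
  have hf_int : Integrable (fun z : ℂ => dbar z • R z) := by
    apply Integrable.mono'
      (g := fun z : ℂ => 4 * M * (‖dbar z‖ / |z.im| ^ 2 + ‖fE z‖))
      ((hint.add hfE_int.norm).const_mul (4 * M))
      (hdbar_meas.smul hR_meas)
    filter_upwards [hs_ae] with z hz
    have h0 : ‖dbar z • R z‖ ≤ ‖dbar z‖ * ‖R z‖ := by
      exact norm_smul_le (dbar z) (R z)
    have hfEn : ‖fE z‖ = ‖dbar z‖ * ‖(E : ℂ) - z‖⁻¹ := by
      simp only [hfEdef]; rw [norm_mul, norm_inv]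
    calc ‖dbar z • R z‖ ≤ ‖dbar z‖ * ‖R z‖ := h0
      _ ≤ ‖dbar z‖ * (4 * M * (1 / |z.im| ^ 2 + ‖(E : ℂ) - z‖⁻¹)) :=
          mul_le_mul_of_nonneg_left (hRbound z hz) (norm_nonneg _)
      _ = 4 * M * (‖dbar z‖ / |z.im| ^ 2 + ‖fE z‖) := by
          rw [hfEn]; ring
  -- the key pointwise estimate
  have hkey : ∀ z : ℂ, z.im ≠ 0 →
      ‖(dbar z • R z) * P - fE z • P‖ ≤ δ / 2 * (‖dbar z‖ / |z.im| ^ 2) := by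
    intro z hz
    obtain ⟨h1, -, hn⟩ := hR z hz
    have him : 0 < |z.im| := abs_pos.mpr hz
    have hEz' := hEz z hz
    have e1 : R z * ((H - (E : ℂ) • (1 : 𝓗 →L[ℂ] 𝓗)) * P)
        = P + (z - (E : ℂ)) • (R z * P) := by
      have esplit : H - (E : ℂ) • (1 : 𝓗 →L[ℂ] 𝓗)
          = (H - z • 1) + (z - (E : ℂ)) • 1 := by
        rw [sub_smul]; abel
      calc R z * ((H - (E : ℂ) • (1 : 𝓗 →L[ℂ] 𝓗)) * P)
          = R z * ((H - z • 1) * P) + R z * (((z - (E : ℂ)) • 1) * P) := by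
            rw [esplit, add_mul, mul_add]
        _ = P + (z - (E : ℂ)) • (R z * P) := by
            rw [← mul_assoc, h1, one_mul, smul_mul_assoc, one_mul, mul_smul_comm]
    have e2 : (dbar z • R z) * P - fE z • P
        = dbar z • (R z * P - ((E : ℂ) - z)⁻¹ • P) := by
      simp only [hfEdef]
      rw [smul_mul_assoc, smul_sub, mul_smul]
    have h4 : ((E : ℂ) - z) • (R z * P - ((E : ℂ) - z)⁻¹ • P)
        = -(R z * ((H - (E : ℂ) • (1 : 𝓗 →L[ℂ] 𝓗)) * P)) := by
      rw [smul_sub, smul_smul, mul_inv_cancel₀ hEz', one_smul, e1]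
      have hneg : ((E : ℂ) - z) = -(z - (E : ℂ)) := by ring
      rw [hneg, neg_smul]; abel
    have e3 : R z * P - ((E : ℂ) - z)⁻¹ • P
        = (-((E : ℂ) - z)⁻¹) • (R z * ((H - (E : ℂ) • (1 : 𝓗 →L[ℂ] 𝓗)) * P)) := by
      calc R z * P - ((E : ℂ) - z)⁻¹ • P
          = ((E : ℂ) - z)⁻¹ • (((E : ℂ) - z) • (R z * P - ((E : ℂ) - z)⁻¹ • P)) := by
            rw [smul_smul, inv_mul_cancel₀ hEz', one_smul]
        _ = (-((E : ℂ) - z)⁻¹) • (R z * ((H - (E : ℂ) • (1 : 𝓗 →L[ℂ] 𝓗)) * P)) := by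
            rw [h4, smul_neg, ← neg_smul]
    rw [e2, e3]
    have n1 : ‖R z * ((H - (E : ℂ) • (1 : 𝓗 →L[ℂ] 𝓗)) * P)‖ ≤ 1 / |z.im| * (δ / 2) := by
      calc ‖R z * ((H - (E : ℂ) • (1 : 𝓗 →L[ℂ] 𝓗)) * P)‖
          ≤ ‖R z‖ * ‖(H - (E : ℂ) • (1 : 𝓗 →L[ℂ] 𝓗)) * P‖ := norm_mul_le _ _
        _ ≤ 1 / |z.im| * (δ / 2) :=
            mul_le_mul hn hns (norm_nonneg _) (by positivity)
    have n2 : ‖(-((E : ℂ) - z)⁻¹)‖ ≤ 1 / |z.im| := by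
      rw [norm_neg, norm_inv, one_div]
      exact inv_anti₀ him (habs z)
    calc ‖dbar z • ((-((E : ℂ) - z)⁻¹) • (R z * ((H - (E : ℂ) • (1 : 𝓗 →L[ℂ] 𝓗)) * P)))‖
        ≤ ‖dbar z‖ * ‖(-((E : ℂ) - z)⁻¹) • (R z * ((H - (E : ℂ) • (1 : 𝓗 →L[ℂ] 𝓗)) * P))‖ := by
          exact norm_smul_le _ _
      _ ≤ ‖dbar z‖ * (‖(-((E : ℂ) - z)⁻¹)‖ * ‖R z * ((H - (E : ℂ) • (1 : 𝓗 →L[ℂ] 𝓗)) * P)‖) := by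
          apply mul_le_mul_of_nonneg_left _ (norm_nonneg _)
          exact norm_smul_le _ _
      _ ≤ ‖dbar z‖ * (1 / |z.im| * (1 / |z.im| * (δ / 2))) := by
          apply mul_le_mul_of_nonneg_left _ (norm_nonneg _)
          exact mul_le_mul n2 n1 (norm_nonneg _) (by positivity)
      _ = δ / 2 * (‖dbar z‖ / |z.im| ^ 2) := by
          field_simp
  -- assembling
  set L : (𝓗 →L[ℂ] 𝓗) →L[ℂ] (𝓗 →L[ℂ] 𝓗) :=
    (ContinuousLinearMap.mul ℂ (𝓗 →L[ℂ] 𝓗)).flip P with hLdef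
  have h1 : (∫ z : ℂ, dbar z • R z) * P = ∫ z : ℂ, (dbar z • R z) * P := by
    exact (L.integral_comp_comm hf_int).symm
  have h2 : Integrable (fun z : ℂ => (dbar z • R z) * P) := L.integrable_comp hf_int
  have h3 : Integrable (fun z : ℂ => fE z • P) := hfE_int.smul_const P
  have h4 : P = ∫ z : ℂ, fE z • P := by
    rw [integral_smul_const, hgE, one_smul]
  have h5 : (∫ z : ℂ, dbar z • R z) * P - P
      = ∫ z : ℂ, ((dbar z • R z) * P - fE z • P) := by
    rw [integral_sub h2 h3, ← h1, ← h4]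
  rw [h5]
  have h6 : ‖∫ z : ℂ, ((dbar z • R z) * P - fE z • P)‖
      ≤ ∫ z : ℂ, δ / 2 * (‖dbar z‖ / |z.im| ^ 2) := by
    apply norm_integral_le_of_norm_le (hint.const_mul (δ / 2))
    filter_upwards [hs_ae] with z hz
    exact hkey z hz
  have h7 : ∫ z : ℂ, δ / 2 * (‖dbar z‖ / |z.im| ^ 2)
      = δ / 2 * ∫ z : ℂ, ‖dbar z‖ / |z.im| ^ 2 := by
    exact integral_const_mul (δ / 2) (fun z : ℂ => ‖dbar z‖ / |z.im| ^ 2)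
  have h8 : (0:ℝ) ≤ ∫ z : ℂ, ‖dbar z‖ / |z.im| ^ 2 :=
    integral_nonneg (fun z => by positivity)
  rw [h7] at h6
  nlinarith
end

section
/- Let H_Ω be a self-adjoint operator bounded below, with eigenvalue E and simple isolated spectrum structure: E separated by gap Δ. Let ψ be a unit vector in the range of the spectral projection P_Ω for E, and write ψ = ψ₁ + ψ₂ where ψ₂ = (I − F)ψ with F a smooth cutoff and suppose ⟨ψ₂, H_Ω ψ₂⟩ ≥ (E+b)‖ψ₂‖² and ‖[H_Ω,F]ψ‖ ≤ ε₀. Then b‖ψ₂‖² ≤ ε₀, i.e. ‖ψ₂‖² ≤ ε₀/b and ‖Fψ‖² ≥ 1 − 2√(ε₀/b). -/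
open scoped InnerProductSpace

lemma norm_apply_le_of_form_le
    {𝓗 : Type*} [NormedAddCommGroup 𝓗] [InnerProductSpace ℂ 𝓗] [CompleteSpace 𝓗]
    (A : 𝓗 →L[ℂ] 𝓗) (hA : IsSelfAdjoint A)
    (h0 : ∀ v : 𝓗, 0 ≤ (⟪v, A v⟫_ℂ).re)
    (h1 : ∀ v : 𝓗, (⟪v, A v⟫_ℂ).re ≤ ‖v‖ ^ 2) (v : 𝓗) : ‖A v‖ ≤ ‖v‖ := by
  have hsymm := (ContinuousLinearMap.isSelfAdjoint_iff_isSymmetric.mp hA)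
  set w := A v with hw
  set c := (⟪v, A v⟫_ℂ).re with hc
  set a := (⟪w, A w⟫_ℂ).re with ha
  have hcross : ⟪v, A w⟫_ℂ = (‖w‖ ^ 2 : ℝ) := by
    have h' : ⟪v, A w⟫_ℂ = ⟪A v, w⟫_ℂ := (hsymm v w).symm
    rw [h', ← hw, inner_self_eq_norm_sq_to_K]
    norm_cast
  have hcross' : ⟪w, A v⟫_ℂ = (‖w‖ ^ 2 : ℝ) := by
    rw [← hw, inner_self_eq_norm_sq_to_K]
    norm_cast
  have hq : ∀ t : ℝ, 0 ≤ c + 2 * t * ‖w‖ ^ 2 + t ^ 2 * a := by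
    intro t
    have h := h0 (v + (t : ℂ) • w)
    have hexp : ⟪v + (t : ℂ) • w, A (v + (t : ℂ) • w)⟫_ℂ
        = ⟪v, A v⟫_ℂ + (t : ℂ) * ⟪v, A w⟫_ℂ + (t : ℂ) * ⟪w, A v⟫_ℂ
          + (t : ℂ) ^ 2 * ⟪w, A w⟫_ℂ := by
      simp only [map_add, map_smul, inner_add_add_self, inner_add_left,
        inner_add_right, inner_smul_left, inner_smul_right]
      ring_nf
      simp [Complex.conj_ofReal]
      ring
    rw [hexp, hcross, hcross'] at h
    simp only [← Complex.ofReal_pow, Complex.add_re, Complex.mul_re,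
      Complex.ofReal_re, Complex.ofReal_im, zero_mul, sub_zero, mul_zero] at h
    rw [← hc, ← ha] at h
    linarith
  have ha0 : 0 ≤ a := h0 w
  have hB : a ≤ ‖w‖ ^ 2 := h1 w
  have hc1 : c ≤ ‖v‖ ^ 2 := h1 v
  have hc0 : 0 ≤ c := h0 v
  have key : (‖w‖ ^ 2) ^ 2 ≤ c * a := by
    rcases eq_or_lt_of_le ha0 with haz | hap
    · have hB0 : ‖w‖ ^ 2 = 0 := by
        by_contra hne
        have hpos : 0 < ‖w‖ ^ 2 := lt_of_le_of_ne (sq_nonneg _) (Ne.symm hne)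
        have h2 := hq (-(c + 1) / (2 * ‖w‖ ^ 2))
        have he : 2 * (-(c + 1) / (2 * ‖w‖ ^ 2)) * ‖w‖ ^ 2 = -(c + 1) := by
          have hw0 : ‖w‖ ≠ 0 := fun h => hne (by rw [h]; ring)
          field_simp
        rw [he, ← haz] at h2
        simp at h2
        linarith
      rw [hB0]; nlinarith
    · have h2 := hq (-(‖w‖ ^ 2) / a)
      have hane : a ≠ 0 := ne_of_gt hap
      have he : c + 2 * (-(‖w‖ ^ 2) / a) * ‖w‖ ^ 2 + (-(‖w‖ ^ 2) / a) ^ 2 * a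
          = c - (‖w‖ ^ 2) ^ 2 / a := by
        field_simp; ring
      rw [he, sub_nonneg, div_le_iff₀ hap] at h2
      linarith
  have hfin : ‖w‖ ^ 2 ≤ ‖v‖ ^ 2 := by nlinarith
  have := Real.sqrt_le_sqrt hfin
  rwa [Real.sqrt_sq (norm_nonneg _), Real.sqrt_sq (norm_nonneg _)] at this

/-- Energy estimate for an eigenvector `ψ` of `H_Ω` with
eigenvalue `E`: writing `ψ = ψ₁ + ψ₂` with `ψ₂ = (I − F)ψ`, if
`⟨ψ₂, H_Ω ψ₂⟩ ≥ (E+b)‖ψ₂‖²` and `‖[H_Ω,F]ψ‖ ≤ ε₀`, then `b‖ψ₂‖² ≤ ε₀`,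
hence `‖ψ₂‖² ≤ ε₀/b` and `‖Fψ‖² ≥ 1 − 2√(ε₀/b)`. -/
theorem eigenvector_localization_estimate
    {𝓗 : Type*} [NormedAddCommGroup 𝓗] [InnerProductSpace ℂ 𝓗] [CompleteSpace 𝓗]
    (H F : 𝓗 →L[ℂ] 𝓗) (ψ : 𝓗) (E b ε₀ : ℝ)
    (hH : IsSelfAdjoint H) (hF : IsSelfAdjoint F)
    -- `0 ≤ F ≤ I`
    (hF0 : ∀ v : 𝓗, 0 ≤ (⟪v, F v⟫_ℂ).re)
    (hF1 : ∀ v : 𝓗, (⟪v, F v⟫_ℂ).re ≤ ‖v‖ ^ 2)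
    (hb : 0 < b) (hε₀ : 0 ≤ ε₀)
    (hψ : ‖ψ‖ = 1)
    (heig : H ψ = (E : ℂ) • ψ)
    -- `⟨ψ₂, H ψ₂⟩ ≥ (E + b)‖ψ₂‖²` for `ψ₂ = (I − F)ψ`
    (hJ : (E + b) * ‖ψ - F ψ‖ ^ 2 ≤ (⟪ψ - F ψ, H (ψ - F ψ)⟫_ℂ).re)
    -- `‖[H, F]ψ‖ ≤ ε₀`
    (hcomm : ‖(H * F - F * H) ψ‖ ≤ ε₀) :
    b * ‖ψ - F ψ‖ ^ 2 ≤ ε₀ ∧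
      ‖ψ - F ψ‖ ^ 2 ≤ ε₀ / b ∧
      1 - 2 * Real.sqrt (ε₀ / b) ≤ ‖F ψ‖ ^ 2 := by
  have hself : ∀ x : 𝓗, (⟪x, x⟫_ℂ).re = ‖x‖ ^ 2 := fun x => by
    have h := inner_self_eq_norm_sq (𝕜 := ℂ) x
    rwa [RCLike.re_to_complex] at h
  have hselfim : ∀ x : 𝓗, (⟪x, x⟫_ℂ).im = 0 := fun x => by
    have h := inner_self_im (𝕜 := ℂ) x
    rwa [RCLike.im_to_complex] at h
  set ψ₂ := ψ - F ψ with hψ₂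
  set C := H * F - F * H with hC
  -- `H ψ₂ = E • ψ₂ - C ψ`
  have h1 : H ψ₂ = (E : ℂ) • ψ₂ - C ψ := by
    simp only [hψ₂, hC, map_sub, ContinuousLinearMap.sub_apply,
      ContinuousLinearMap.mul_apply, heig, map_smul, smul_sub]
    abel
  -- energy identity
  have h2 : (⟪ψ₂, H ψ₂⟫_ℂ).re = E * ‖ψ₂‖ ^ 2 - (⟪ψ₂, C ψ⟫_ℂ).re := by
    rw [h1, inner_sub_right, inner_smul_right, Complex.sub_re, Complex.mul_re,
      Complex.ofReal_re, Complex.ofReal_im, hself, hselfim]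
    ring
  have h3 : b * ‖ψ₂‖ ^ 2 ≤ -(⟪ψ₂, C ψ⟫_ℂ).re := by nlinarith [hJ, h2]
  -- `‖ψ₂‖ ≤ 1`
  have hle1 : ‖ψ₂‖ ≤ 1 := by
    have hA : IsSelfAdjoint ((1 : 𝓗 →L[ℂ] 𝓗) - F) := (IsSelfAdjoint.one _).sub hF
    have happ : ∀ v : 𝓗, ((1 : 𝓗 →L[ℂ] 𝓗) - F) v = v - F v := fun v => rfl
    have h0' : ∀ v : 𝓗, 0 ≤ (⟪v, ((1 : 𝓗 →L[ℂ] 𝓗) - F) v⟫_ℂ).re := by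
      intro v
      rw [happ, inner_sub_right, Complex.sub_re, hself]
      linarith [hF1 v]
    have h1' : ∀ v : 𝓗, (⟪v, ((1 : 𝓗 →L[ℂ] 𝓗) - F) v⟫_ℂ).re ≤ ‖v‖ ^ 2 := by
      intro v
      rw [happ, inner_sub_right, Complex.sub_re, hself]
      linarith [hF0 v]
    have := norm_apply_le_of_form_le _ hA h0' h1' ψ
    rwa [happ, ← hψ₂, hψ] at this
  have h4 : -(⟪ψ₂, C ψ⟫_ℂ).re ≤ ε₀ := by
    have hr : -(⟪ψ₂, C ψ⟫_ℂ).re ≤ ‖⟪ψ₂, C ψ⟫_ℂ‖ := by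
      have := abs_le_abs_of_nonneg (abs_nonneg _) (le_refl |(⟪ψ₂, C ψ⟫_ℂ).re|)
      calc -(⟪ψ₂, C ψ⟫_ℂ).re ≤ |(⟪ψ₂, C ψ⟫_ℂ).re| := neg_le_abs _
        _ ≤ ‖⟪ψ₂, C ψ⟫_ℂ‖ := Complex.abs_re_le_norm _
    have hcs : ‖⟪ψ₂, C ψ⟫_ℂ‖ ≤ ‖ψ₂‖ * ‖C ψ‖ := norm_inner_le_norm _ _
    have : ‖ψ₂‖ * ‖C ψ‖ ≤ 1 * ε₀ :=
      mul_le_mul hle1 hcomm (norm_nonneg _) zero_le_one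
    linarith
  have hmain : b * ‖ψ₂‖ ^ 2 ≤ ε₀ := le_trans h3 h4
  refine ⟨hmain, ?_, ?_⟩
  · rw [le_div_iff₀ hb]; linarith [hmain]
  · have hsq : ‖ψ₂‖ ^ 2 ≤ ε₀ / b := by rw [le_div_iff₀ hb]; linarith [hmain]
    have hs : ‖ψ₂‖ ≤ Real.sqrt (ε₀ / b) := by
      have := Real.sqrt_le_sqrt hsq
      rwa [Real.sqrt_sq (norm_nonneg _)] at this
    have hnorm : 1 - ‖ψ₂‖ ≤ ‖F ψ‖ := by
      have := norm_sub_norm_le ψ (F ψ)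
      rw [← hψ₂, hψ] at this
      linarith
    nlinarith [norm_nonneg (F ψ), norm_nonneg ψ₂, sq_nonneg (1 - ‖ψ₂‖)]
end

section
/- Let H be self-adjoint and g a C⁴ compactly supported function with g(0) = 1 and g'(0) = 0, and suppose 0 is in the resolvent set of H. Then (I − g(H)) H⁻² = −∫_ℂ (∂_z̄ g̃)(z) z⁻² (H−z)⁻¹ dz dz̄, and hence ‖(I − g(H))H⁻²‖ ≤ |||g|||₄ in the Helffer–Sjöstrand norm. -/
open MeasureTheory

private lemma hs_aux_null : (volume : Measure ℂ) {z : ℂ | z.im = 0} = 0 := by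
  have h : {z : ℂ | z.im = 0} = (LinearMap.ker Complex.imLm : Submodule ℝ ℂ) := by
    ext z; simp [LinearMap.mem_ker]
  rw [h]
  apply Measure.addHaar_submodule
  intro h'
  have h2 : (Complex.I).im = 0 := by
    have := h' ▸ Submodule.mem_top (x := Complex.I) (R := ℝ)
    simpa [LinearMap.mem_ker] using this
  simp at h2

private lemma hs_aux_pf {𝓗 : Type*} [NormedAddCommGroup 𝓗] [InnerProductSpace ℂ 𝓗]
    [CompleteSpace 𝓗]
    (H Hinv : 𝓗 →L[ℂ] 𝓗) (R : ℂ → 𝓗 →L[ℂ] 𝓗) (z : ℂ)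
    (hHinv1 : Hinv * H = 1) (hHinv2 : H * Hinv = 1)
    (h1 : R z * (H - z • (1 : 𝓗 →L[ℂ] 𝓗)) = 1)
    (h2 : (H - z • (1 : 𝓗 →L[ℂ] 𝓗)) * R z = 1)
    (hz : z ≠ 0) :
    (z ^ 2)⁻¹ • R z = (Hinv * Hinv) * R z + z⁻¹ • (Hinv * Hinv) + (z ^ 2)⁻¹ • Hinv := by
  have key : ∀ T S : 𝓗 →L[ℂ] 𝓗, T * (H - z • 1) = S * (H - z • 1) → T = S := by
    intro T S h
    have := congrArg (· * R z) h
    simpa [mul_assoc, h2] using this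
  apply key
  have e2 : (Hinv * Hinv) * (H - z • 1) = Hinv - z • (Hinv * Hinv) := by
    rw [mul_sub]
    congr 1
    · rw [mul_assoc, hHinv1, mul_one]
    · rw [mul_smul_comm, mul_one]
  have e3 : Hinv * (H - z • 1) = 1 - z • Hinv := by
    rw [mul_sub, hHinv1, mul_smul_comm, mul_one]
  have hzz : (z ^ 2)⁻¹ * z = z⁻¹ := by field_simp
  rw [smul_mul_assoc, h1, add_mul, add_mul, mul_assoc, h1, mul_one,
    smul_mul_assoc, smul_mul_assoc, e2, e3, smul_sub, smul_sub, smul_smul, smul_smul,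
    inv_mul_cancel₀ hz, hzz, one_smul]
  abel

private lemma hs_aux_comm {𝓗 : Type*} [NormedAddCommGroup 𝓗] [InnerProductSpace ℂ 𝓗]
    [CompleteSpace 𝓗]
    (H Hinv : 𝓗 →L[ℂ] 𝓗) (R : ℂ → 𝓗 →L[ℂ] 𝓗) (z : ℂ)
    (hHinv1 : Hinv * H = 1) (hHinv2 : H * Hinv = 1)
    (h1 : R z * (H - z • (1 : 𝓗 →L[ℂ] 𝓗)) = 1)
    (h2 : (H - z • (1 : 𝓗 →L[ℂ] 𝓗)) * R z = 1) :
    R z * Hinv = Hinv * R z := by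
  have hc : Hinv * (H - z • 1) = (H - z • 1) * Hinv := by
    rw [mul_sub, sub_mul, hHinv1, hHinv2, mul_smul_comm, smul_mul_assoc, mul_one, one_mul]
  calc R z * Hinv = R z * Hinv * ((H - z • 1) * R z) := by rw [h2, mul_one]
    _ = R z * (Hinv * (H - z • 1)) * R z := by rw [← mul_assoc, mul_assoc (R z)]
    _ = R z * ((H - z • 1) * Hinv) * R z := by rw [hc]
    _ = (R z * (H - z • 1)) * (Hinv * R z) := by rw [← mul_assoc, mul_assoc]
    _ = Hinv * R z := by rw [h1, one_mul]

/-- For self-adjoint invertible `H` and a `C⁴` compactly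
supported `g` with `g(0) = 1`, `g'(0) = 0` (expressed through the almost
analytic extension), `(I − g(H))H⁻² = −∫_ℂ (∂_z̄ g̃)(z) z⁻² (H−z)⁻¹ dz dz̄`,
whence `‖(I − g(H))H⁻²‖ ≤ |||g|||₄`. -/
theorem one_sub_gH_times_inv_sq
    {𝓗 : Type*} [NormedAddCommGroup 𝓗] [InnerProductSpace ℂ 𝓗] [CompleteSpace 𝓗]
    (H Hinv : 𝓗 →L[ℂ] 𝓗) (N₄ : ℝ)
    (dbar : ℂ → ℂ) (R : ℂ → 𝓗 →L[ℂ] 𝓗)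
    (hH : IsSelfAdjoint H)
    -- `0` in the resolvent set: `Hinv = H⁻¹`
    (hHinv1 : Hinv * H = 1) (hHinv2 : H * Hinv = 1)
    -- resolvent data with the self-adjoint bound
    (hR : ∀ z : ℂ, z.im ≠ 0 →
      R z * (H - z • (1 : 𝓗 →L[ℂ] 𝓗)) = 1 ∧
      (H - z • (1 : 𝓗 →L[ℂ] 𝓗)) * R z = 1 ∧
      ‖R z‖ ≤ 1 / |z.im|)
    -- Helffer–Sjöstrand norm `|||g|||₄`
    (hint : Integrable (fun z : ℂ => ‖dbar z‖ / |z.im| ^ 3))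
    (hN₄ : ∫ z : ℂ, ‖dbar z‖ / |z.im| ^ 3 ≤ N₄)
    (hintg : Integrable (fun z : ℂ => dbar z • R z))
    (hint2 : Integrable (fun z : ℂ => (dbar z / z ^ 2) • R z))
    -- `g(0) = 1`, i.e. `∫ (∂_z̄ g̃) z⁻¹ = −1`
    (hg0 : ∫ z : ℂ, dbar z / z = -1)
    -- `g'(0) = 0`, i.e. `∫ (∂_z̄ g̃) z⁻² = 0`
    (hg'0 : ∫ z : ℂ, dbar z / z ^ 2 = 0) :
    (1 - ∫ z : ℂ, dbar z • R z) * (Hinv * Hinv) =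
        -∫ z : ℂ, (dbar z / z ^ 2) • R z ∧
      ‖(1 - ∫ z : ℂ, dbar z • R z) * (Hinv * Hinv)‖ ≤ N₄ := by
  set K : 𝓗 →L[ℂ] 𝓗 := Hinv * Hinv with hK
  set A : 𝓗 →L[ℂ] 𝓗 := ∫ z : ℂ, dbar z • R z with hA
  -- a.e. the imaginary part is nonzero
  have hae : ∀ᵐ z : ℂ, z.im ≠ 0 := by
    rw [MeasureTheory.ae_iff]
    simpa using hs_aux_null
  -- pointwise identity
  have hpt : ∀ z : ℂ, z.im ≠ 0 →
      (dbar z / z ^ 2) • R z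
        = dbar z • (K * R z) + (dbar z / z) • K + (dbar z / z ^ 2) • Hinv := by
    intro z hz
    obtain ⟨h1, h2, _⟩ := hR z hz
    have hz0 : z ≠ 0 := fun h => hz (by simp [h])
    have := hs_aux_pf H Hinv R z hHinv1 hHinv2 h1 h2 hz0
    calc (dbar z / z ^ 2) • R z = dbar z • ((z ^ 2)⁻¹ • R z) := by
          rw [smul_smul, div_eq_mul_inv]
      _ = dbar z • ((Hinv * Hinv) * R z + z⁻¹ • (Hinv * Hinv) + (z ^ 2)⁻¹ • Hinv) := by
          rw [this]
      _ = dbar z • (K * R z) + (dbar z / z) • K + (dbar z / z ^ 2) • Hinv := by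
          rw [smul_add, smul_add, smul_smul, smul_smul, div_eq_mul_inv, div_eq_mul_inv]
  -- integrability of the pieces
  have i1 : Integrable (fun z : ℂ => dbar z • (K * R z)) := by
    have := (ContinuousLinearMap.compL ℂ 𝓗 𝓗 𝓗 K).integrable_comp hintg
    simpa [ContinuousLinearMap.mul_def] using this
  have hdz : Integrable (fun z : ℂ => dbar z / z) := by
    by_contra h
    rw [integral_undef h] at hg0
    norm_num at hg0
  have i2 : Integrable (fun z : ℂ => (dbar z / z) • K) := hdz.smul_const K
  have i3 : Integrable (fun z : ℂ => (dbar z / z ^ 2) • Hinv) := by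
    have heq : (fun z : ℂ => (dbar z / z ^ 2) • Hinv)
        =ᵐ[volume] fun z : ℂ =>
          (dbar z / z ^ 2) • R z - dbar z • (K * R z) - (dbar z / z) • K := by
      filter_upwards [hae] with z hz
      rw [hpt z hz]; abel
    exact (((hint2.sub i1).sub i2).congr heq.symm)
  -- compute the integral
  have hsplit : ∫ z : ℂ, (dbar z / z ^ 2) • R z
      = (∫ z : ℂ, dbar z • (K * R z)) + (∫ z : ℂ, (dbar z / z) • K)
        + ∫ z : ℂ, (dbar z / z ^ 2) • Hinv := by
    have hcong : ∫ z : ℂ, (dbar z / z ^ 2) • R z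
        = ∫ z : ℂ, (dbar z • (K * R z) + (dbar z / z) • K + (dbar z / z ^ 2) • Hinv) := by
      apply integral_congr_ae
      filter_upwards [hae] with z hz
      exact hpt z hz
    have e1 : Integrable (fun z : ℂ => dbar z • (K * R z) + (dbar z / z) • K) := i1.add i2
    rw [hcong, integral_add e1 i3, integral_add i1 i2]
  have hI1 : (∫ z : ℂ, dbar z • (K * R z)) = K * A := by
    have := ContinuousLinearMap.integral_comp_comm (ContinuousLinearMap.compL ℂ 𝓗 𝓗 𝓗 K) hintg
    simpa [ContinuousLinearMap.mul_def] using this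
  have hI2 : (∫ z : ℂ, (dbar z / z) • K) = -K := by
    rw [integral_smul_const, hg0, neg_smul, one_smul]
  have hI3 : (∫ z : ℂ, (dbar z / z ^ 2) • Hinv) = 0 := by
    rw [integral_smul_const, hg'0, zero_smul]
  have hKA : A * K = K * A := by
    have hAK : A * K = ∫ z : ℂ, dbar z • (R z * K) := by
      have := ContinuousLinearMap.integral_comp_comm
        ((ContinuousLinearMap.compL ℂ 𝓗 𝓗 𝓗).flip K) hintg
      simpa [smul_mul_assoc, ContinuousLinearMap.mul_def] using this.symm
    rw [hAK, ← hI1]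
    apply integral_congr_ae
    filter_upwards [hae] with z hz
    obtain ⟨h1, h2, _⟩ := hR z hz
    have hcomm := hs_aux_comm H Hinv R z hHinv1 hHinv2 h1 h2
    have : R z * K = K * R z := by
      rw [hK, ← mul_assoc, hcomm, mul_assoc, hcomm, ← mul_assoc]
    rw [this]
  have hmain : (1 - A) * K = -∫ z : ℂ, (dbar z / z ^ 2) • R z := by
    rw [hsplit, hI1, hI2, hI3, sub_mul, one_mul, hKA]
    abel
  refine ⟨hmain, ?_⟩
  rw [hmain, norm_neg]
  calc ‖∫ z : ℂ, (dbar z / z ^ 2) • R z‖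
      ≤ ∫ z : ℂ, ‖(dbar z / z ^ 2) • R z‖ := norm_integral_le_integral_norm _
    _ ≤ ∫ z : ℂ, ‖dbar z‖ / |z.im| ^ 3 := by
        apply integral_mono_ae hint2.norm hint
        filter_upwards [hae] with z hz
        obtain ⟨_, _, hRn⟩ := hR z hz
        have him : (0:ℝ) < |z.im| := abs_pos.mpr hz
        have hzn : |z.im| ≤ ‖z‖ := by
          simpa [Complex.norm_def] using Complex.abs_im_le_norm z
        have hRn' : ‖R z‖ ≤ 1 / |z.im| := hRn
        calc ‖(dbar z / z ^ 2) • R z‖ = ‖dbar z / z ^ 2‖ * ‖R z‖ := norm_smul _ _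
          _ ≤ (‖dbar z‖ / ‖z‖ ^ 2) * (1 / |z.im|) := by
              apply mul_le_mul _ hRn' (norm_nonneg _) (by positivity)
              simp [norm_div]
          _ ≤ (‖dbar z‖ / |z.im| ^ 2) * (1 / |z.im|) := by
              apply mul_le_mul_of_nonneg_right _ (by positivity)
              apply div_le_div_of_nonneg_left (norm_nonneg _) (by positivity)
              exact pow_le_pow_left₀ him.le hzn 2
          _ = ‖dbar z‖ / |z.im| ^ 3 := by ring
    _ ≤ N₄ := hN₄
end
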